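/- arXiv:1106.3611 — 3 statements merged into one kernel-verified Lean document; each statement's English description precedes it below -/
import Mathlib

section
/- Let A = A_2(2, α_1, α_2, γ) and D u = Σ_{j=0}^2 λ_j(x) e_j ∂_j u with real-valued λ_j and e_0 = 1. For C¹ functions u, v : ℝ^3 → A, writing u = u_0 + u_1 e_1 + u_2 e_2 + u_{12} e_{12}, the product rule takes the form D(u·v) = (Du)·v + u·(Dv) + 2λ_1[-u_2 γ - u_{12} γ e_1 - u_{12} α_1 e_2 + u_2 e_{12}] ∂_1 v + 2λ_2[u_1 γ + u_{12} α_2 e_1 + u_{12} γ e_2 - u_1 e_{12}] ∂_2 v. -/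
open scoped BigOperators

/-- Partial derivative in the `k`-th coordinate direction. -/
noncomputable def pd {m : ℕ} {F : Type*} [NormedAddCommGroup F] [NormedSpace ℝ F]
    (k : Fin m) (u : (Fin m → ℝ) → F) (x : Fin m → ℝ) : F :=
  fderiv ℝ u x (Pi.single k 1)

/-- The generalized Cauchy–Riemann operator in `A₂(2, α₁, α₂, γ)`:
`Dw = λ₀∂₀w + λ₁e₁∂₁w + λ₂e₂∂₂w`. -/
noncomputable def D2op {A : Type*} [NormedRing A] [NormedAlgebra ℝ A]
    (lam : Fin 3 → (Fin 3 → ℝ) → ℝ) (e₁ e₂ : A)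
    (w : (Fin 3 → ℝ) → A) (x : Fin 3 → ℝ) : A :=
  lam 0 x • pd 0 w x + lam 1 x • (e₁ * pd 1 w x) + lam 2 x • (e₂ * pd 2 w x)

lemma pd_mul {m : ℕ} {A : Type*} [NormedRing A] [NormedAlgebra ℝ A]
    (k : Fin m) (a b : (Fin m → ℝ) → A) (x : Fin m → ℝ)
    (ha : DifferentiableAt ℝ a x) (hb : DifferentiableAt ℝ b x) :
    pd k (fun y => a y * b y) x = pd k a x * b x + a x * pd k b x := by
  simp only [pd, fderiv_fun_mul' ha hb, ContinuousLinearMap.add_apply,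
    ContinuousLinearMap.smul_apply, MulOpposite.smul_eq_mul_unop, MulOpposite.unop_op, smul_eq_mul]
  abel

/-- Explicit product rule for `D` in `A₂(2, α₁, α₂, γ)`, for
`u = u₀ + u₁e₁ + u₂e₂ + u₁₂e₁₂`:
`D(u·v) = (Du)·v + u·(Dv) + 2λ₁[-u₂γ - u₁₂γe₁ - u₁₂α₁e₂ + u₂e₁₂]∂₁v
         + 2λ₂[u₁γ + u₁₂α₂e₁ + u₁₂γe₂ - u₁e₁₂]∂₂v`. -/
theorem D2op_mul {A : Type*} [NormedRing A] [NormedAlgebra ℝ A]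
    [FiniteDimensional ℝ A]
    (α₁ α₂ γ : ℝ) (e₁ e₂ : A)
    (h1 : e₁ * e₁ = algebraMap ℝ A (-α₁))
    (h2 : e₂ * e₂ = algebraMap ℝ A (-α₂))
    (h12 : e₁ * e₂ + e₂ * e₁ = algebraMap ℝ A (2 * γ))
    (lam : Fin 3 → (Fin 3 → ℝ) → ℝ)
    (u₀ u₁ u₂ u₁₂ : (Fin 3 → ℝ) → ℝ)
    (hu₀ : ContDiff ℝ 1 u₀) (hu₁ : ContDiff ℝ 1 u₁)
    (hu₂ : ContDiff ℝ 1 u₂) (hu₁₂ : ContDiff ℝ 1 u₁₂)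
    (u : (Fin 3 → ℝ) → A)
    (hu : ∀ x, u x = u₀ x • (1 : A) + u₁ x • e₁ + u₂ x • e₂ + u₁₂ x • (e₁ * e₂))
    (v : (Fin 3 → ℝ) → A) (hv : ContDiff ℝ 1 v) :
    ∀ x, D2op lam e₁ e₂ (fun y => u y * v y) x =
      D2op lam e₁ e₂ u x * v x + u x * D2op lam e₁ e₂ v x
      + (2 * lam 1 x) •
          (((-(u₂ x * γ)) • (1 : A) + (-(u₁₂ x * γ)) • e₁ + (-(u₁₂ x * α₁)) • e₂ +
            u₂ x • (e₁ * e₂)) * pd 1 v x)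
      + (2 * lam 2 x) •
          (((u₁ x * γ) • (1 : A) + (u₁₂ x * α₂) • e₁ + (u₁₂ x * γ) • e₂ +
            (-(u₁ x)) • (e₁ * e₂)) * pd 2 v x) := by
  intro x
  -- basic algebra relations
  have h11 : e₁ * e₁ = (-α₁) • (1 : A) := by rw [h1, Algebra.algebraMap_eq_smul_one]
  have h22 : e₂ * e₂ = (-α₂) • (1 : A) := by rw [h2, Algebra.algebraMap_eq_smul_one]
  have h21 : e₂ * e₁ = (2 * γ) • (1 : A) - e₁ * e₂ := by
    rw [eq_sub_iff_add_eq, add_comm, h12, Algebra.algebraMap_eq_smul_one]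
  have h112 : e₁ * (e₁ * e₂) = (-α₁) • e₂ := by
    rw [← mul_assoc, h11, smul_mul_assoc, one_mul]
  have h212 : e₂ * (e₁ * e₂) = (2 * γ) • e₂ + α₂ • e₁ := by
    rw [← mul_assoc, h21, sub_mul, smul_mul_assoc, one_mul, mul_assoc, h22,
      mul_smul_comm, mul_one]
    module
  have h121 : (e₁ * e₂) * e₁ = (2 * γ) • e₁ + α₁ • e₂ := by
    rw [mul_assoc, h21, mul_sub, mul_smul_comm, mul_one, ← mul_assoc, h11,
      smul_mul_assoc, one_mul]
    module
  have h122 : (e₁ * e₂) * e₂ = (-α₂) • e₁ := by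
    rw [mul_assoc, h22, mul_smul_comm, mul_one]
  -- commutator identities
  have comm1 : ∀ y, e₁ * u y = u y * e₁ +
      (2:ℝ) • ((-(u₂ y * γ)) • (1 : A) + (-(u₁₂ y * γ)) • e₁ + (-(u₁₂ y * α₁)) • e₂ +
        u₂ y • (e₁ * e₂)) := by
    intro y
    rw [hu y]
    simp only [mul_add, add_mul, mul_smul_comm, smul_mul_assoc, mul_one, one_mul,
      h11, h21, h112, h121]
    simp only [smul_add, smul_sub, smul_smul]
    module
  have comm2 : ∀ y, e₂ * u y = u y * e₂ +
      (2:ℝ) • ((u₁ y * γ) • (1 : A) + (u₁₂ y * α₂) • e₁ + (u₁₂ y * γ) • e₂ +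
        (-(u₁ y)) • (e₁ * e₂)) := by
    intro y
    rw [hu y]
    simp only [mul_add, add_mul, mul_smul_comm, smul_mul_assoc, mul_one, one_mul,
      h22, h21, h212, h122]
    simp only [smul_add, smul_sub, smul_smul]
    module
  -- differentiability of u
  have huc : ContDiff ℝ 1 u := by
    have : u = fun y => u₀ y • (1 : A) + u₁ y • e₁ + u₂ y • e₂ + u₁₂ y • (e₁ * e₂) :=
      funext hu
    rw [this]
    exact (((hu₀.smul contDiff_const).add (hu₁.smul contDiff_const)).add
      (hu₂.smul contDiff_const)).add (hu₁₂.smul contDiff_const)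
  have hud : DifferentiableAt ℝ u x := (huc.differentiable one_ne_zero) x
  have hvd : DifferentiableAt ℝ v x := (hv.differentiable one_ne_zero) x
  -- product rule for each coordinate
  simp only [D2op, pd_mul _ u v x hud hvd]
  -- rewrite commutators
  have key1 : e₁ * (u x * pd 1 v x) = u x * (e₁ * pd 1 v x) +
      (2:ℝ) • (((-(u₂ x * γ)) • (1 : A) + (-(u₁₂ x * γ)) • e₁ + (-(u₁₂ x * α₁)) • e₂ +
        u₂ x • (e₁ * e₂)) * pd 1 v x) := by
    rw [← mul_assoc, comm1 x, add_mul, smul_mul_assoc, mul_assoc]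
  have key2 : e₂ * (u x * pd 2 v x) = u x * (e₂ * pd 2 v x) +
      (2:ℝ) • (((u₁ x * γ) • (1 : A) + (u₁₂ x * α₂) • e₁ + (u₁₂ x * γ) • e₂ +
        (-(u₁ x)) • (e₁ * e₂)) * pd 2 v x) := by
    rw [← mul_assoc, comm2 x, add_mul, smul_mul_assoc, mul_assoc]
  rw [mul_add (e₁), mul_add (e₂), key1, key2]
  simp only [add_mul, mul_add, smul_mul_assoc, mul_smul_comm, mul_assoc, smul_add, smul_smul]
  module
end

section
/- Let u : Ω ⊆ ℝ^{n+1} → A_n(2, α_j, γ_ij) be a C² function satisfying Du = 0, where Du = Σ_{j=0}^n λ_j(x) e_j ∂_j u with real-valued C¹ coefficients λ_j and e_0 = 1. Let D̄u = λ_0(x) ∂_0 u − Σ_{j=1}^n λ_j(x) e_j ∂_j u be the conjugate operator. Then D̄(Du) = Σ_{i=0}^n λ_0 ∂_0(λ_i) e_i ∂_i u − Σ_{j=1}^n Σ_{i=0}^n λ_j e_j ∂_j(λ_i) e_i ∂_i u + λ_0² ∂_0² u + Σ_{i=1}^n α_i λ_i² ∂_i² u − 2 Σ_{i<j} γ_ij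 λ_i λ_j ∂_i ∂_j u, and this expression vanishes identically on Ω. -/
open scoped BigOperators

/-- The generalized Cauchy–Riemann operator `Du = Σⱼ λⱼ(x) eⱼ ∂ⱼu` (with `e₀ = 1`). -/
noncomputable def Dop {n : ℕ} {A : Type*} [NormedRing A] [NormedAlgebra ℝ A]
    (lam : Fin (n + 1) → (Fin (n + 1) → ℝ) → ℝ) (e : Fin (n + 1) → A)
    (u : (Fin (n + 1) → ℝ) → A) (x : Fin (n + 1) → ℝ) : A :=
  ∑ j, lam j x • (e j * pd j u x)

/-- The conjugate operator `D̄u = λ₀∂₀u - Σ_{j≥1} λⱼ eⱼ ∂ⱼu`. -/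
noncomputable def Dbar {n : ℕ} {A : Type*} [NormedRing A] [NormedAlgebra ℝ A]
    (lam : Fin (n + 1) → (Fin (n + 1) → ℝ) → ℝ) (e : Fin (n + 1) → A)
    (u : (Fin (n + 1) → ℝ) → A) (x : Fin (n + 1) → ℝ) : A :=
  lam 0 x • pd 0 u x - ∑ j ∈ Finset.Ioi (0 : Fin (n + 1)), lam j x • (e j * pd j u x)

lemma univ_split_aux {n : ℕ} {M : Type*} [AddCommMonoid M] (f : Fin (n+1) → M) :
    ∑ i, f i = f 0 + ∑ i ∈ Finset.Ioi (0 : Fin (n+1)), f i := by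
  have h : Finset.Ioi (0 : Fin (n+1)) = Finset.univ.erase 0 := by
    ext i; simp [Fin.pos_iff_ne_zero]
  rw [h, Finset.add_sum_erase _ f (Finset.mem_univ 0)]

lemma pair_decomp_aux {n : ℕ} {M : Type*} [AddCommMonoid M] (f : Fin (n+1) → Fin (n+1) → M) :
    ∑ j ∈ Finset.Ioi (0 : Fin (n+1)), ∑ i ∈ Finset.Ioi (0 : Fin (n+1)), f i j
      = (∑ i ∈ Finset.Ioi (0 : Fin (n+1)), f i i)
        + ∑ i ∈ Finset.Ioi (0 : Fin (n+1)), ∑ j ∈ Finset.Ioi i, (f i j + f j i) := by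
  classical
  set s := Finset.Ioi (0 : Fin (n+1)) with hs
  have inner : ∀ j ∈ s, ∑ i ∈ s, f i j
      = f j j + ((∑ i ∈ s.filter (· < j), f i j) + ∑ i ∈ s.filter (j < ·), f i j) := by
    intro j hj
    have h1 : ∑ i ∈ s, f i j
        = (∑ i ∈ s.filter (· < j), f i j) + ∑ i ∈ s.filter (fun i => ¬ i < j), f i j :=
      (Finset.sum_filter_add_sum_filter_not s _ _).symm
    have h2 : s.filter (fun i => ¬ i < j) = insert j (s.filter (fun i => j < i)) := by
      ext i
      simp only [Finset.mem_filter, Finset.mem_insert, not_lt]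
      constructor
      · rintro ⟨hi, hle⟩
        rcases eq_or_lt_of_le hle with h | h
        · exact Or.inl h.symm
        · exact Or.inr ⟨hi, h⟩
      · rintro (rfl | ⟨hi, h⟩)
        · exact ⟨hj, le_rfl⟩
        · exact ⟨hi, h.le⟩
    have h3 : j ∉ s.filter (fun i => j < i) := by simp
    rw [h1, h2, Finset.sum_insert h3]
    abel
  rw [Finset.sum_congr rfl inner, Finset.sum_add_distrib, Finset.sum_add_distrib]
  have hcomm : ∑ j ∈ s, ∑ i ∈ s.filter (· < j), f i j
      = ∑ i ∈ s, ∑ j ∈ s.filter (i < ·), f i j := by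
    rw [Finset.sum_comm' (t' := s) (s' := fun i => s.filter (i < ·))]
    intro i j
    simp only [Finset.mem_filter]
    tauto
  have hfil : ∀ i ∈ s, s.filter (i < ·) = Finset.Ioi i := by
    intro i hi
    ext j
    simp only [Finset.mem_filter, Finset.mem_Ioi, hs]
    exact ⟨fun h => h.2, fun h => ⟨lt_trans (Finset.mem_Ioi.mp hi) h, h⟩⟩
  have h4 : ∑ j ∈ s, ∑ i ∈ s.filter (j < ·), f i j = ∑ j ∈ s, ∑ i ∈ Finset.Ioi j, f i j :=
    Finset.sum_congr rfl fun j hj => by rw [hfil j hj]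
  have h5 : ∑ i ∈ s, ∑ j ∈ s.filter (i < ·), f i j = ∑ i ∈ s, ∑ j ∈ Finset.Ioi i, f i j :=
    Finset.sum_congr rfl fun i hi => by rw [hfil i hi]
  rw [hcomm, h4, h5]
  congr 1
  rw [← Finset.sum_add_distrib]
  exact Finset.sum_congr rfl fun i _ => (Finset.sum_add_distrib).symm

lemma core_aux {n : ℕ} {A : Type*} [NormedRing A] [NormedAlgebra ℝ A]
    (α : Fin (n + 1) → ℝ) (γ : Fin (n + 1) → Fin (n + 1) → ℝ)
    (e : Fin (n + 1) → A) (he0 : e 0 = 1)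
    (hsq : ∀ j, j ≠ 0 → e j * e j = algebraMap ℝ A (-(α j)))
    (hanti : ∀ i j, i ≠ 0 → j ≠ 0 → i ≠ j →
      e i * e j + e j * e i = algebraMap ℝ A (2 * γ i j))
    (L : Fin (n+1) → ℝ) (M : Fin (n+1) → Fin (n+1) → ℝ)
    (v : Fin (n+1) → A) (P : Fin (n+1) → Fin (n+1) → A)
    (hP : ∀ i j, P i j = P j i) :
    L 0 • (∑ i, (M 0 i • (e i * v i) + L i • (e i * P 0 i)))
      - ∑ j ∈ Finset.Ioi (0 : Fin (n+1)),
          L j • (e j * ∑ i, (M j i • (e i * v i) + L i • (e i * P j i)))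
    = (∑ i, (L 0 * M 0 i) • (e i * v i))
        - (∑ j ∈ Finset.Ioi (0 : Fin (n + 1)), ∑ i,
            (L j * M j i) • (e j * (e i * v i)))
        + (L 0 ^ 2) • P 0 0
        + (∑ i ∈ Finset.Ioi (0 : Fin (n + 1)), (α i * L i ^ 2) • P i i)
        - (∑ i ∈ Finset.Ioi (0 : Fin (n + 1)), ∑ j ∈ Finset.Ioi i,
            (2 * γ i j * L i * L j) • P i j) := by
  have hne : ∀ i : Fin (n+1), i ∈ Finset.Ioi (0 : Fin (n+1)) → i ≠ 0 := by
    intro i hi; exact Fin.pos_iff_ne_zero.mp (Finset.mem_Ioi.mp hi)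
  have hL : L 0 • (∑ i, (M 0 i • (e i * v i) + L i • (e i * P 0 i)))
      = (∑ i, (L 0 * M 0 i) • (e i * v i)) + ∑ i, (L 0 * L i) • (e i * P 0 i) := by
    rw [Finset.sum_add_distrib, smul_add, Finset.smul_sum, Finset.smul_sum]
    simp only [smul_smul]
  have hR : ∀ j, L j • (e j * ∑ i, (M j i • (e i * v i) + L i • (e i * P j i)))
      = (∑ i, (L j * M j i) • (e j * (e i * v i)))
        + ∑ i, (L j * L i) • (e j * (e i * P j i)) := by
    intro j
    rw [Finset.mul_sum, Finset.smul_sum, ← Finset.sum_add_distrib]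
    refine Finset.sum_congr rfl fun i _ => ?_
    rw [mul_add, smul_add, mul_smul_comm, mul_smul_comm, smul_smul, smul_smul]
  rw [hL, Finset.sum_congr rfl fun j _ => hR j, Finset.sum_add_distrib]
  have key : (∑ i, (L 0 * L i) • (e i * P 0 i))
      - ∑ j ∈ Finset.Ioi (0 : Fin (n+1)), ∑ i, (L j * L i) • (e j * (e i * P j i))
      = (L 0 ^ 2) • P 0 0
        + (∑ i ∈ Finset.Ioi (0 : Fin (n + 1)), (α i * L i ^ 2) • P i i)
        - (∑ i ∈ Finset.Ioi (0 : Fin (n + 1)), ∑ j ∈ Finset.Ioi i,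
            (2 * γ i j * L i * L j) • P i j) := by
    have hA : (∑ i, (L 0 * L i) • (e i * P 0 i))
        = (L 0 ^ 2) • P 0 0 + ∑ i ∈ Finset.Ioi (0 : Fin (n+1)), (L 0 * L i) • (e i * P 0 i) := by
      rw [univ_split_aux (fun i => (L 0 * L i) • (e i * P 0 i))]
      congr 1
      rw [he0, one_mul, sq]
    have hB : ∀ j ∈ Finset.Ioi (0 : Fin (n+1)),
        (∑ i, (L j * L i) • (e j * (e i * P j i)))
        = (L 0 * L j) • (e j * P 0 j)
          + ∑ i ∈ Finset.Ioi (0 : Fin (n+1)), (L j * L i) • (e j * (e i * P j i)) := by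
      intro j hj
      rw [univ_split_aux (fun i => (L j * L i) • (e j * (e i * P j i)))]
      congr 1
      rw [he0, one_mul, hP j 0, mul_comm (L j) (L 0)]
    rw [hA, Finset.sum_congr rfl hB, Finset.sum_add_distrib]
    have hdouble : ∑ j ∈ Finset.Ioi (0 : Fin (n+1)), ∑ i ∈ Finset.Ioi (0 : Fin (n+1)),
          (L j * L i) • (e j * (e i * P j i))
        = (∑ i ∈ Finset.Ioi (0 : Fin (n+1)), (-(α i * L i ^ 2)) • P i i)
          + ∑ i ∈ Finset.Ioi (0 : Fin (n+1)), ∑ j ∈ Finset.Ioi i,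
              (2 * γ i j * L i * L j) • P i j := by
      rw [pair_decomp_aux (fun i j => (L j * L i) • (e j * (e i * P j i)))]
      congr 1
      · refine Finset.sum_congr rfl fun i hi => ?_
        rw [← mul_assoc, hsq i (hne i hi), ← Algebra.smul_def, smul_smul,
            show L i * L i * -α i = -(α i * L i ^ 2) by ring]
      · refine Finset.sum_congr rfl fun i hi => Finset.sum_congr rfl fun j hj => ?_
        have hij : i ≠ j := ne_of_lt (Finset.mem_Ioi.mp hj)
        have hj0 : j ≠ 0 := by
          have : (0:Fin (n+1)) < j := lt_trans (Finset.mem_Ioi.mp hi) (Finset.mem_Ioi.mp hj)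
          exact Fin.pos_iff_ne_zero.mp this
        have hi0 : i ≠ 0 := hne i hi
        rw [hP j i, mul_comm (L j) (L i), ← smul_add, ← mul_assoc, ← mul_assoc, ← add_mul,
            add_comm (e j * e i) (e i * e j), hanti i j hi0 hj0 hij, ← Algebra.smul_def,
            smul_smul, show L i * L j * (2 * γ i j) = 2 * γ i j * L i * L j by ring]
    rw [hdouble]
    simp only [neg_smul, Finset.sum_neg_distrib]
    abel
  rw [← sub_add_sub_comm, key]
  abel

theorem analysis_part_aux {n : ℕ} {A : Type*} [NormedRing A] [NormedAlgebra ℝ A]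
    (lam : Fin (n + 1) → (Fin (n + 1) → ℝ) → ℝ) (e : Fin (n + 1) → A)
    (Ω : Set (Fin (n + 1) → ℝ)) (u : (Fin (n + 1) → ℝ) → A)
    (hlam : ∀ j, ContDiff ℝ 1 (lam j)) (hΩ : IsOpen Ω)
    (hu : ContDiffOn ℝ 2 u Ω) {x : Fin (n+1) → ℝ} (hx : x ∈ Ω) :
    (∀ i j, pd i (pd j u) x = pd j (pd i u) x) ∧
    (∀ j, pd j (Dop lam e u) x
      = ∑ i, (pd j (lam i) x • (e i * pd i u x) + lam i x • (e i * pd j (pd i u) x))) := by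
  have hux : ContDiffAt ℝ 2 u x := (hu x hx).contDiffAt (hΩ.mem_nhds hx)
  have hf1 : ContDiffAt ℝ 1 (fderiv ℝ u) x := hux.fderiv_right (by norm_num)
  have hdf : DifferentiableAt ℝ (fderiv ℝ u) x := hf1.differentiableAt one_ne_zero
  have hdpd : ∀ i, DifferentiableAt ℝ (pd i u) x := by
    intro i
    exact ((ContinuousLinearMap.apply ℝ A (Pi.single i 1)).differentiable.differentiableAt).comp
      x hdf
  have hfpd : ∀ i, fderiv ℝ (pd i u) x = (fderiv ℝ (fderiv ℝ u) x).flip (Pi.single i 1) := by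
    intro i
    have : pd i u = fun y => (fderiv ℝ u y) (Pi.single i 1) := rfl
    rw [this, fderiv_clm_apply hdf (differentiableAt_const _)]
    simp
  have hpdpd : ∀ i j, pd j (pd i u) x
      = fderiv ℝ (fderiv ℝ u) x (Pi.single j 1) (Pi.single i 1) := by
    intro i j
    show fderiv ℝ (pd i u) x (Pi.single j 1) = _
    rw [hfpd i]
    rfl
  constructor
  · intro i j
    rw [hpdpd, hpdpd]
    exact (hux.isSymmSndFDerivAt (by norm_num)) _ _
  · intro j
    have hdmul : ∀ i, DifferentiableAt ℝ (fun y => e i * pd i u y) x := fun i =>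
      (hdpd i).const_mul _
    have hdterm : ∀ i, DifferentiableAt ℝ (fun y => lam i y • (e i * pd i u y)) x := fun i =>
      (((hlam i).differentiable one_ne_zero) x).smul (hdmul i)
    have h1 : pd j (Dop lam e u) x
        = ∑ i, (fderiv ℝ (fun y => lam i y • (e i * pd i u y)) x) (Pi.single j 1) := by
      show (fderiv ℝ (Dop lam e u) x) (Pi.single j 1) = _
      rw [show Dop lam e u = fun y => ∑ i, lam i y • (e i * pd i u y) from rfl,
        fderiv_fun_sum (fun i _ => hdterm i)]
      simp [ContinuousLinearMap.sum_apply]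
    rw [h1]
    refine Finset.sum_congr rfl fun i _ => ?_
    rw [fderiv_fun_smul (((hlam i).differentiable one_ne_zero) x) (hdmul i)]
    rw [fderiv_const_mul (hdpd i) (e i)]
    simp only [ContinuousLinearMap.add_apply, ContinuousLinearMap.smul_apply,
      ContinuousLinearMap.smulRight_apply]
    rw [add_comm]
    rfl

/-- For a C² generalized monogenic function `u` (`Du = 0`), the composition `D̄Du`
equals the displayed second-order expression, and that expression vanishes on `Ω`. -/
theorem Dbar_Dop_eq_and_vanishes {n : ℕ} {A : Type*} [NormedRing A] [NormedAlgebra ℝ A]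
    [FiniteDimensional ℝ A]
    (α : Fin (n + 1) → ℝ) (γ : Fin (n + 1) → Fin (n + 1) → ℝ)
    (e : Fin (n + 1) → A) (he0 : e 0 = 1)
    (hsq : ∀ j, j ≠ 0 → e j * e j = algebraMap ℝ A (-(α j)))
    (hanti : ∀ i j, i ≠ 0 → j ≠ 0 → i ≠ j →
      e i * e j + e j * e i = algebraMap ℝ A (2 * γ i j))
    (lam : Fin (n + 1) → (Fin (n + 1) → ℝ) → ℝ)
    (hlam : ∀ j, ContDiff ℝ 1 (lam j))
    (Ω : Set (Fin (n + 1) → ℝ)) (hΩ : IsOpen Ω)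
    (u : (Fin (n + 1) → ℝ) → A) (hu : ContDiffOn ℝ 2 u Ω)
    (hmono : ∀ x ∈ Ω, Dop lam e u x = 0) :
    ∀ x ∈ Ω,
      Dbar lam e (Dop lam e u) x =
        (∑ i, (lam 0 x * pd 0 (lam i) x) • (e i * pd i u x))
        - (∑ j ∈ Finset.Ioi (0 : Fin (n + 1)), ∑ i,
            (lam j x * pd j (lam i) x) • (e j * (e i * pd i u x)))
        + (lam 0 x ^ 2) • pd 0 (pd 0 u) x
        + (∑ i ∈ Finset.Ioi (0 : Fin (n + 1)), (α i * lam i x ^ 2) • pd i (pd i u) x)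
        - (∑ i ∈ Finset.Ioi (0 : Fin (n + 1)), ∑ j ∈ Finset.Ioi i,
            (2 * γ i j * lam i x * lam j x) • pd i (pd j u) x) ∧
      (∑ i, (lam 0 x * pd 0 (lam i) x) • (e i * pd i u x))
        - (∑ j ∈ Finset.Ioi (0 : Fin (n + 1)), ∑ i,
            (lam j x * pd j (lam i) x) • (e j * (e i * pd i u x)))
        + (lam 0 x ^ 2) • pd 0 (pd 0 u) x
        + (∑ i ∈ Finset.Ioi (0 : Fin (n + 1)), (α i * lam i x ^ 2) • pd i (pd i u) x)
        - (∑ i ∈ Finset.Ioi (0 : Fin (n + 1)), ∑ j ∈ Finset.Ioi i,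
            (2 * γ i j * lam i x * lam j x) • pd i (pd j u) x) = 0 := by
  intro x hx
  obtain ⟨hsym, hexp⟩ := analysis_part_aux lam e Ω u hlam hΩ hu hx
  have hz : ∀ j, pd j (Dop lam e u) x = 0 := by
    intro j
    have hev : Dop lam e u =ᶠ[nhds x] (fun _ => (0:A)) :=
      Filter.eventuallyEq_of_mem (hΩ.mem_nhds hx) hmono
    show fderiv ℝ (Dop lam e u) x (Pi.single j 1) = 0
    rw [hev.fderiv_eq, fderiv_fun_const]
    simp
  have hDbar0 : Dbar lam e (Dop lam e u) x = 0 := by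
    show lam 0 x • pd 0 (Dop lam e u) x
        - ∑ j ∈ Finset.Ioi (0 : Fin (n+1)), lam j x • (e j * pd j (Dop lam e u) x) = 0
    simp [hz]
  have hDbar_eq : Dbar lam e (Dop lam e u) x =
      (∑ i, (lam 0 x * pd 0 (lam i) x) • (e i * pd i u x))
        - (∑ j ∈ Finset.Ioi (0 : Fin (n + 1)), ∑ i,
            (lam j x * pd j (lam i) x) • (e j * (e i * pd i u x)))
        + (lam 0 x ^ 2) • pd 0 (pd 0 u) x
        + (∑ i ∈ Finset.Ioi (0 : Fin (n + 1)), (α i * lam i x ^ 2) • pd i (pd i u) x)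
        - (∑ i ∈ Finset.Ioi (0 : Fin (n + 1)), ∑ j ∈ Finset.Ioi i,
            (2 * γ i j * lam i x * lam j x) • pd i (pd j u) x) := by
    have h0 : Dbar lam e (Dop lam e u) x
        = lam 0 x • pd 0 (Dop lam e u) x
          - ∑ j ∈ Finset.Ioi (0 : Fin (n+1)), lam j x • (e j * pd j (Dop lam e u) x) := rfl
    rw [h0, hexp 0,
      Finset.sum_congr rfl (fun j _ => by rw [hexp j] :
        ∀ j ∈ Finset.Ioi (0 : Fin (n+1)), lam j x • (e j * pd j (Dop lam e u) x)
          = lam j x • (e j * ∑ i, (pd j (lam i) x • (e i * pd i u x)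
              + lam i x • (e i * pd j (pd i u) x))))]
    exact core_aux α γ e he0 hsq hanti (fun i => lam i x) (fun j i => pd j (lam i) x)
      (fun i => pd i u x) (fun j i => pd j (pd i u) x) (fun i j => hsym i j)
  exact ⟨hDbar_eq, by rw [← hDbar_eq]; exact hDbar0⟩
end

section
/- Let D u = Σ_{j=0}^n λ_j(x) e_j ∂_j u with real-valued C¹ coefficients, λ_0 ≠ 0, β_i := λ_i/λ_0, and let F u = Σ_{i=0}^n A^{(i)}(x) ∂_i u with real-valued C¹ coefficients A^{(i)}. For any C² function u with Du = 0, one has the identity D(F u) = Σ_{i=1}^n (D A^{(i)} − (D A^{(0)}) β_i e_i) ∂_i u − Σ_{i=1}^n Σ_{j=0}^n A^{(j)}(x) λ_0 ∂_j(β_i) e_i ∂_i u, i.e., D(Fu) is a linear combination of first-order derivatives of u only. -/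
open scoped BigOperators

/-- `D` applied to a real-valued function `a`. -/
noncomputable def DopR {n : ℕ} {A : Type*} [NormedRing A] [NormedAlgebra ℝ A]
    (lam : Fin (n + 1) → (Fin (n + 1) → ℝ) → ℝ) (e : Fin (n + 1) → A)
    (a : (Fin (n + 1) → ℝ) → ℝ) (x : Fin (n + 1) → ℝ) : A :=
  ∑ j, (lam j x * pd j a x) • e j

section helpers
variable {m : ℕ} {F : Type*} [NormedAddCommGroup F] [NormedSpace ℝ F] {x : Fin m → ℝ}

lemma pd_sum {ι : Type*} (s : Finset ι) (k : Fin m) (f : ι → (Fin m → ℝ) → F)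
    (h : ∀ i ∈ s, DifferentiableAt ℝ (f i) x) :
    pd k (fun y => ∑ i ∈ s, f i y) x = ∑ i ∈ s, pd k (f i) x := by
  unfold pd
  rw [fderiv_fun_sum h]
  simp

lemma pd_smul (k : Fin m) (a : (Fin m → ℝ) → ℝ) (f : (Fin m → ℝ) → F)
    (ha : DifferentiableAt ℝ a x) (hf : DifferentiableAt ℝ f x) :
    pd k (fun y => a y • f y) x = pd k a x • f x + a x • pd k f x := by
  unfold pd
  rw [fderiv_fun_smul ha hf]
  simp [add_comm]

lemma pd_const_mul {A : Type*} [NormedRing A] [NormedAlgebra ℝ A] {x : Fin m → ℝ}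
    (k : Fin m) (b : A) (f : (Fin m → ℝ) → A) (hf : DifferentiableAt ℝ f x) :
    pd k (fun y => b * f y) x = b * pd k f x := by
  unfold pd
  rw [fderiv_const_mul hf b]
  simp

lemma pd_div (k : Fin m) (f g : (Fin m → ℝ) → ℝ)
    (hf : DifferentiableAt ℝ f x) (hg : DifferentiableAt ℝ g x) (hgx : g x ≠ 0) :
    pd k (fun y => f y / g y) x = (pd k f x * g x - f x * pd k g x) / g x ^ 2 := by
  have h1 : HasFDerivAt (fun y => (g y)⁻¹)
      (-((ContinuousLinearMap.mulLeftRight ℝ ℝ (g x)⁻¹ (g x)⁻¹).comp (fderiv ℝ g x))) x := by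
    have := (hasFDerivAt_inv' (𝕜 := ℝ) hgx).comp x hg.hasFDerivAt
    simpa [Function.comp_def] using this
  have h2 := hf.hasFDerivAt.mul h1
  unfold pd
  have h3 : (fun y => f y / g y) = fun y => f y * (g y)⁻¹ := by
    funext y; rw [div_eq_mul_inv]
  rw [h3, show (fun y => f y * (g y)⁻¹) = f * fun y => (g y)⁻¹ from rfl, h2.fderiv]
  simp only [ContinuousLinearMap.add_apply, ContinuousLinearMap.smul_apply,
    ContinuousLinearMap.neg_apply, ContinuousLinearMap.comp_apply,
    ContinuousLinearMap.mulLeftRight_apply, smul_eq_mul]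
  field_simp
  ring

lemma pd_pd_comm {u : (Fin m → ℝ) → F} (hu : ContDiffAt ℝ 2 u x) (i j : Fin m) :
    pd j (pd i u) x = pd i (pd j u) x := by
  have hdd : DifferentiableAt ℝ (fderiv ℝ u) x :=
    (hu.fderiv_right (m := 1) le_rfl).differentiableAt one_ne_zero
  have key : ∀ v w : Fin m → ℝ,
      fderiv ℝ (fun y => fderiv ℝ u y v) x w = fderiv ℝ (fderiv ℝ u) x w v := by
    intro v w
    have h1 : HasFDerivAt (fun y => fderiv ℝ u y v)
        ((ContinuousLinearMap.apply ℝ F v).comp (fderiv ℝ (fderiv ℝ u) x)) x :=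
      (ContinuousLinearMap.apply ℝ F v).hasFDerivAt.comp x hdd.hasFDerivAt
    rw [h1.fderiv]; rfl
  have hsymm := hu.isSymmSndFDerivAt (by simp [minSmoothness_of_isRCLikeNormedField])
  unfold pd
  rw [key, key]
  exact hsymm _ _
end helpers


/-- For a C² monogenic `u` (`Du = 0`) and `Fu = Σᵢ A⁽ⁱ⁾(x)∂ᵢu` with real C¹
coefficients, `D(Fu)` is the displayed linear combination of first-order
derivatives of `u`:
`D(Fu) = Σ_{i≥1}(DA⁽ⁱ⁾ - DA⁽⁰⁾βᵢeᵢ)∂ᵢu - Σ_{i≥1}Σⱼ A⁽ʲ⁾λ₀∂ⱼ(βᵢ)eᵢ∂ᵢu`. -/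
theorem Dop_F_eq_first_order {n : ℕ} {A : Type*}
    [NormedRing A] [NormedAlgebra ℝ A] [FiniteDimensional ℝ A]
    (α : Fin (n + 1) → ℝ) (γ : Fin (n + 1) → Fin (n + 1) → ℝ)
    (e : Fin (n + 1) → A) (he0 : e 0 = 1)
    (hsq : ∀ j, j ≠ 0 → e j * e j = algebraMap ℝ A (-(α j)))
    (hanti : ∀ i j, i ≠ 0 → j ≠ 0 → i ≠ j →
      e i * e j + e j * e i = algebraMap ℝ A (2 * γ i j))
    (lam : Fin (n + 1) → (Fin (n + 1) → ℝ) → ℝ)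
    (hlam : ∀ j, ContDiff ℝ 1 (lam j))
    (Ω : Set (Fin (n + 1) → ℝ)) (hΩ : IsOpen Ω)
    (hlam0 : ∀ x ∈ Ω, lam 0 x ≠ 0)
    (Aco : Fin (n + 1) → (Fin (n + 1) → ℝ) → ℝ)
    (hAco : ∀ i, ContDiff ℝ 1 (Aco i))
    (u : (Fin (n + 1) → ℝ) → A) (hu : ContDiffOn ℝ 2 u Ω)
    (hmono : ∀ x ∈ Ω, Dop lam e u x = 0) :
    ∀ x ∈ Ω,
      Dop lam e (fun y => ∑ i, Aco i y • pd i u y) x =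
        (∑ i ∈ Finset.Ioi (0 : Fin (n + 1)),
          ((DopR lam e (Aco i) x
            - (lam i x / lam 0 x) • (DopR lam e (Aco 0) x * e i)) * pd i u x))
        - (∑ i ∈ Finset.Ioi (0 : Fin (n + 1)), ∑ j,
            (Aco j x * lam 0 x * pd j (fun y => lam i y / lam 0 y) x) •
              (e i * pd i u x)) := by
  intro x hx
  classical
  have hxm : Ω ∈ nhds x := hΩ.mem_nhds hx
  have hu2 : ContDiffAt ℝ 2 u x := (hu x hx).contDiffAt hxm
  have hdd : DifferentiableAt ℝ (fderiv ℝ u) x :=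
    (hu2.fderiv_right (m := 1) le_rfl).differentiableAt one_ne_zero
  have hUd : ∀ i, DifferentiableAt ℝ (pd i u) x := by
    intro i
    have h1 : DifferentiableAt ℝ
        (⇑(ContinuousLinearMap.apply ℝ A (Pi.single i (1 : ℝ))) ∘ fderiv ℝ u) x :=
      (ContinuousLinearMap.apply ℝ A (Pi.single i 1)).differentiableAt.comp x hdd
    exact h1
  have haD : ∀ i, DifferentiableAt ℝ (Aco i) x := fun i =>
    ((hAco i).differentiable one_ne_zero).differentiableAt
  have hlD : ∀ j, DifferentiableAt ℝ (lam j) x := fun j =>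
    ((hlam j).differentiable one_ne_zero).differentiableAt
  have hl0 : lam 0 x ≠ 0 := hlam0 x hx
  have huniv : (Finset.univ : Finset (Fin (n + 1))) = insert 0 (Finset.Ioi 0) := by
    ext i
    simp only [Finset.mem_insert, Finset.mem_Ioi, Finset.mem_univ, iff_true,
      Fin.pos_iff_ne_zero]
    tauto
  have hsplit : ∀ f : Fin (n + 1) → A, ∑ i, f i = f 0 + ∑ i ∈ Finset.Ioi 0, f i := by
    intro f; rw [huniv, Finset.sum_insert (by simp)]
  -- monogenicity at x : expression for pd 0 u x
  have hU0 : pd 0 u x =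
      -(∑ i ∈ Finset.Ioi (0 : Fin (n + 1)), (lam i x / lam 0 x) • (e i * pd i u x)) := by
    have h := hmono x hx
    unfold Dop at h
    rw [hsplit (fun j => lam j x • (e j * pd j u x))] at h
    simp only [he0, one_mul] at h
    have h2 : lam 0 x • pd 0 u x =
        -(∑ i ∈ Finset.Ioi (0 : Fin (n + 1)), lam i x • (e i * pd i u x)) :=
      eq_neg_of_add_eq_zero_left h
    have h3 := congrArg (fun z => (lam 0 x)⁻¹ • z) h2
    simp only [smul_smul, inv_mul_cancel₀ hl0, one_smul, smul_neg, Finset.smul_sum] at h3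
    rw [h3]
    congr 1
    refine Finset.sum_congr rfl fun i _ => ?_
    rw [div_eq_inv_mul]
  -- derivative of the monogenicity relation
  have hK : ∀ i : Fin (n + 1),
      (∑ k, lam k x • (e k * pd i (pd k u) x)) =
        -(∑ k, pd i (lam k) x • (e k * pd k u x)) := by
    intro i
    have hDz : pd i (Dop lam e u) x = 0 := by
      have hev : Dop lam e u =ᶠ[nhds x] fun _ => (0 : A) := by
        filter_upwards [hxm] with y hy using hmono y hy
      unfold pd
      rw [hev.fderiv_eq]
      simp
    have hcalc : pd i (Dop lam e u) x =
        ∑ k, (pd i (lam k) x • (e k * pd k u x) + lam k x • (e k * pd i (pd k u) x)) := by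
      have h1 : pd i (Dop lam e u) x =
          ∑ k, pd i (fun y => lam k y • (e k * pd k u y)) x :=
        pd_sum Finset.univ i (fun k y => lam k y • (e k * pd k u y))
          (fun k _ => (hlD k).smul ((hUd k).const_mul (e k)))
      rw [h1]
      refine Finset.sum_congr rfl fun k _ => ?_
      rw [pd_smul i (lam k) (fun y => e k * pd k u y) (hlD k) ((hUd k).const_mul (e k)),
        pd_const_mul i (e k) (pd k u) (hUd k)]
    rw [hcalc, Finset.sum_add_distrib] at hDz
    exact eq_neg_of_add_eq_zero_right hDz
  -- expansion of D(Fu)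
  have hFd : ∀ k, pd k (fun y => ∑ i, Aco i y • pd i u y) x =
      ∑ i, (pd k (Aco i) x • pd i u x + Aco i x • pd k (pd i u) x) := by
    intro k
    have h1 : pd k (fun y => ∑ i, Aco i y • pd i u y) x =
        ∑ i, pd k (fun y => Aco i y • pd i u y) x :=
      pd_sum Finset.univ k (fun i y => Aco i y • pd i u y)
        (fun i _ => (haD i).smul (hUd i))
    rw [h1]
    exact Finset.sum_congr rfl fun i _ =>
      pd_smul k (Aco i) (pd i u) (haD i) (hUd i)
  have hB : Dop lam e (fun y => ∑ i, Aco i y • pd i u y) x =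
      (∑ i, DopR lam e (Aco i) x * pd i u x) +
        ∑ i, Aco i x • (∑ k, lam k x • (e k * pd k (pd i u) x)) := by
    unfold Dop
    calc ∑ k, lam k x • (e k * pd k (fun y => ∑ i, Aco i y • pd i u y) x)
        = ∑ k, ∑ i, ((lam k x * pd k (Aco i) x) • (e k * pd i u x)
            + (Aco i x * lam k x) • (e k * pd k (pd i u) x)) := by
          refine Finset.sum_congr rfl fun k _ => ?_
          rw [hFd k, Finset.mul_sum, Finset.smul_sum]
          refine Finset.sum_congr rfl fun i _ => ?_
          rw [mul_add, smul_add, mul_smul_comm, mul_smul_comm, smul_smul, smul_smul,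
            mul_comm (lam k x) (Aco i x)]
      _ = (∑ k, ∑ i, (lam k x * pd k (Aco i) x) • (e k * pd i u x))
            + ∑ k, ∑ i, (Aco i x * lam k x) • (e k * pd k (pd i u) x) := by
          rw [← Finset.sum_add_distrib]
          exact Finset.sum_congr rfl fun k _ => Finset.sum_add_distrib
      _ = (∑ i, DopR lam e (Aco i) x * pd i u x) +
            ∑ i, Aco i x • (∑ k, lam k x • (e k * pd k (pd i u) x)) := by
          congr 1
          · rw [Finset.sum_comm]
            refine Finset.sum_congr rfl fun i _ => ?_
            unfold DopR
            rw [Finset.sum_mul]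
            exact Finset.sum_congr rfl fun k _ => by rw [smul_mul_assoc]
          · rw [Finset.sum_comm]
            refine Finset.sum_congr rfl fun i _ => ?_
            rw [Finset.smul_sum]
            exact Finset.sum_congr rfl fun k _ => by rw [smul_smul]
  -- use Schwarz + differentiated monogenicity
  have hB2 : Dop lam e (fun y => ∑ i, Aco i y • pd i u y) x =
      (∑ i, DopR lam e (Aco i) x * pd i u x) +
        ∑ j, Aco j x • (-(∑ k, pd j (lam k) x • (e k * pd k u x))) := by
    rw [hB]
    congr 1
    refine Finset.sum_congr rfl fun i _ => ?_
    congr 1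
    rw [← hK i]
    exact Finset.sum_congr rfl fun k _ => by rw [pd_pd_comm hu2 i k]
  -- quotient rule
  have hq : ∀ i j : Fin (n + 1),
      lam 0 x * pd j (fun y => lam i y / lam 0 y) x =
        pd j (lam i) x - lam i x / lam 0 x * pd j (lam 0) x := by
    intro i j
    rw [pd_div j (lam i) (lam 0) (hlD i) (hlD 0) hl0]
    field_simp
  -- first sum matches
  have hT1 : (∑ i, DopR lam e (Aco i) x * pd i u x) =
      ∑ i ∈ Finset.Ioi (0 : Fin (n + 1)),
        ((DopR lam e (Aco i) x
          - (lam i x / lam 0 x) • (DopR lam e (Aco 0) x * e i)) * pd i u x) := by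
    rw [hsplit (fun i => DopR lam e (Aco i) x * pd i u x), hU0, mul_neg, Finset.mul_sum]
    simp only [mul_smul_comm, sub_mul, smul_mul_assoc, mul_assoc, Finset.sum_sub_distrib]
    abel
  -- second sum matches
  have hT2 : (∑ j, Aco j x • (-(∑ k, pd j (lam k) x • (e k * pd k u x)))) =
      -(∑ i ∈ Finset.Ioi (0 : Fin (n + 1)), ∑ j,
          (Aco j x * lam 0 x * pd j (fun y => lam i y / lam 0 y) x) •
            (e i * pd i u x)) := by
    have e1 : ∀ j, Aco j x • (-(∑ k, pd j (lam k) x • (e k * pd k u x)))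
        = ∑ i ∈ Finset.Ioi (0 : Fin (n + 1)),
            (Aco j x * (lam i x / lam 0 x * pd j (lam 0) x - pd j (lam i) x)) •
              (e i * pd i u x) := by
      intro j
      have inner : (∑ k, pd j (lam k) x • (e k * pd k u x))
          = ∑ i ∈ Finset.Ioi (0 : Fin (n + 1)),
              (pd j (lam i) x - pd j (lam 0) x * (lam i x / lam 0 x)) • (e i * pd i u x) := by
        rw [hsplit (fun k => pd j (lam k) x • (e k * pd k u x)), he0, one_mul, hU0, smul_neg,
          Finset.smul_sum, neg_add_eq_sub, ← Finset.sum_sub_distrib]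
        refine Finset.sum_congr rfl fun i _ => ?_
        rw [smul_smul, ← sub_smul]
      rw [inner, ← Finset.sum_neg_distrib, Finset.smul_sum]
      refine Finset.sum_congr rfl fun i _ => ?_
      rw [← neg_smul, smul_smul]
      congr 1
      ring
    rw [Finset.sum_congr rfl fun j _ => e1 j, Finset.sum_comm, ← Finset.sum_neg_distrib]
    refine Finset.sum_congr rfl fun i _ => ?_
    rw [← Finset.sum_neg_distrib]
    refine Finset.sum_congr rfl fun j _ => ?_
    rw [← neg_smul]
    congr 1
    rw [mul_assoc, hq i j]
    ring
  rw [hB2, hT1, hT2, sub_eq_add_neg]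
end
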